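/- Let p > 3 be a prime, let m be an integer with 1 ≤ m ≤ (p-1)/2, and let t be a p-adic integer. Then binom(m + pt - 1, (p-1)/2) · binom(-1 - pt - m, (p-1)/2) ≡ pt/m (mod p²) in the ring of p-adic integers. -/

import Mathlib

/-- The generalized binomial coefficient `C(x, n) = x(x-1)⋯(x-n+1)/n!` for a
`p`-adic number `x` (a `p`-adic integer when `x` is). -/
noncomputable def padicChoose {p : ℕ} [Fact p.Prime] (x : ℚ_[p]) (n : ℕ) : ℚ_[p] :=
  (∏ j ∈ Finset.range n, (x - j)) / (n.factorial : ℚ_[p])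


open Finset


-- factorial ascending
lemma aux_asc (a : ℕ) : ∀ b : ℕ, a.factorial * ∏ j ∈ range b, (a + 1 + j) = (a + b).factorial
  | 0 => by simp
  | (b+1) => by
    rw [prod_range_succ, ← mul_assoc, aux_asc a b]
    have : a + 1 + b = a + b + 1 := by omega
    rw [this, ← Nat.add_assoc, Nat.factorial_succ, Nat.mul_comm]

-- descending product
lemma aux_desc (q : ℕ) : ∀ m : ℕ, m ≤ q → (q - m).factorial * ∏ i ∈ range m, (q - i) = q.factorial
  | 0, _ => by simp
  | (m+1), h => by
    rw [prod_range_succ, ← mul_assoc]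
    have h1 : m ≤ q := Nat.le_of_succ_le h
    have h2 : q - m = (q - (m+1)) + 1 := by omega
    calc (q - (m+1)).factorial * (∏ i ∈ range m, (q - i)) * (q - m)
        = ((q - (m+1)).factorial * (q - m)) * ∏ i ∈ range m, (q - i) := by ring
      _ = (q - m).factorial * ∏ i ∈ range m, (q - i) := by
          rw [h2, Nat.factorial_succ, ← h2, Nat.mul_comm (q-m)]
      _ = q.factorial := aux_desc q m h1

lemma aux_fact (n : ℕ) : ∏ j ∈ range n, ((j:ℤ) + 1) = n.factorial := by
  induction n with
  | zero => simp
  | succ k ih => rw [prod_range_succ, ih, Nat.factorial_succ]; push_cast; ring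

-- integer negative product
lemma aux_neg (n : ℕ) : ∏ j ∈ range n, ((j : ℤ) - n) = (-1)^n * n.factorial := by
  rw [← Finset.prod_range_reflect]
  have : ∀ j ∈ range n, ((↑(n - 1 - j) : ℤ) - n) = -((j:ℤ) + 1) := by
    intro j hj
    rw [mem_range] at hj
    have : ((n - 1 - j : ℕ) : ℤ) = (n:ℤ) - 1 - j := by omega
    rw [this]; ring
  rw [Finset.prod_congr rfl this]
  have : ∀ j ∈ range n, -((j:ℤ) + 1) = (-1) * ((j:ℤ)+1) := by intros; ring
  rw [Finset.prod_congr rfl this, Finset.prod_mul_distrib, Finset.prod_const, card_range]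
  rw [aux_fact]

-- epsilon lemma
lemma aux_eps {R : Type*} [CommRing R] {ε : R} (hε : ε * ε = 0) {ι : Type*} (s : Finset ι)
    (a c : ι → R) : ε * ∏ j ∈ s, (a j + ε * c j) = ε * ∏ j ∈ s, a j := by
  classical
  induction s using Finset.induction_on with
  | empty => simp
  | insert _ _ hx ih =>
    rw [prod_insert hx, prod_insert hx]
    calc ε * ((a _ + ε * c _) * ∏ j ∈ _, (a j + ε * c j))
        = a _ * (ε * ∏ j ∈ _, (a j + ε * c j)) + (ε * ε) * (c _ * ∏ j ∈ _, (a j + ε * c j)) := by ring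
      _ = a _ * (ε * ∏ j ∈ _, a j) := by rw [ih, hε]; ring
      _ = _ := by ring

lemma key (p : ℕ) [Fact p.Prime] (q m : ℕ) (hq : 2*q+1 = p) (hm1 : 1 ≤ m) (hm2 : m ≤ q) :
    (2 : ZMod p) * (m : ZMod p)^2 *
      ∏ j ∈ (Finset.range q).erase (m-1), (((j : ZMod p)+1)^2 - (m : ZMod p)^2)
      = -((q.factorial : ZMod p))^2 := by
  set K := ZMod p
  -- Step A : split factors
  have hA : ∀ j ∈ (range q).erase (m-1), (((j:K)+1)^2 - (m:K)^2)
      = ((j:K)+1-(m:K)) * ((j:K)+1+(m:K)) := by intros; ring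
  rw [Finset.prod_congr rfl hA, Finset.prod_mul_distrib]
  -- Step B : the negative-part product
  have hsetd : Disjoint (range (m-1)) (Finset.Ico m q) := by
    rw [Finset.disjoint_left]; intro j hj hj2
    rw [mem_range] at hj; rw [Finset.mem_Ico] at hj2; omega
  have hset : (range q).erase (m-1) = range (m-1) ∪ Finset.Ico m q := by
    ext j; simp only [Finset.mem_erase, mem_range, Finset.mem_union, Finset.mem_Ico]; omega
  have hPnegZ : ∏ j ∈ (range q).erase (m-1), ((j:ℤ)+1-(m:ℤ))
      = (-1)^(m-1) * (m-1).factorial * (q-m).factorial := by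
    rw [hset, Finset.prod_union hsetd]
    have h1 : ∀ j ∈ range (m-1), ((j:ℤ)+1-(m:ℤ)) = (j:ℤ) - ((m-1 : ℕ) : ℤ) := by
      intro j hj; have : ((m-1:ℕ):ℤ) = (m:ℤ) - 1 := by omega
      rw [this]; ring
    rw [Finset.prod_congr rfl h1, aux_neg]
    rw [Finset.prod_Ico_eq_prod_range]
    have h2 : ∀ i ∈ range (q-m), ((m+i:ℕ):ℤ)+1-(m:ℤ) = (i:ℤ)+1 := by
      intro i hi; push_cast; ring
    rw [Finset.prod_congr rfl h2, aux_fact]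
  have hPneg : ∏ j ∈ (range q).erase (m-1), ((j:K)+1-(m:K))
      = (-1)^(m-1) * ((m-1).factorial : K) * ((q-m).factorial : K) := by
    have := congrArg (Int.cast : ℤ → K) hPnegZ
    push_cast [K] at this
    exact this
  -- Step C : the positive-part product
  have hmem : m - 1 ∈ range q := by rw [mem_range]; omega
  have hC0 := Finset.mul_prod_erase (range q) (fun j => ((j:K)+1+(m:K))) hmem
  have hC : (2:K)*(m:K) * ∏ j ∈ (range q).erase (m-1), ((j:K)+1+(m:K))
      = ∏ j ∈ range q, ((j:K)+1+(m:K)) := by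
    rw [← hC0, Nat.cast_sub hm1, Nat.cast_one]; ring
  have hm1K : ((m-1:ℕ):K) = (m:K) - 1 := by
    rw [Nat.cast_sub hm1, Nat.cast_one]
  have hfull : ∏ j ∈ range q, ((j:K)+1+(m:K)) = ((∏ j ∈ range q, (m+1+j) : ℕ) : K) := by
    push_cast [K]; apply Finset.prod_congr rfl; intros; ring
  -- Step D : Wilson-style congruence
  have hD : ((q+m).factorial : K) * ((q-m).factorial : K) = (-1)^m * ((q.factorial : K))^2 := by
    have hasc := congrArg (Nat.cast : ℕ → K) (aux_asc q m)
    push_cast [K] at hasc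
    have hterm : ∀ i ∈ range m, ((q:K)+1+(i:K)) = (-1) * ((q-i:ℕ):K) := by
      intro i hi; rw [mem_range] at hi
      have hsum : (q+1+i) + (q-i) = p := by omega
      have : ((q+1+i : ℕ):K) + ((q-i:ℕ):K) = 0 := by
        rw [← Nat.cast_add, hsum]; exact ZMod.natCast_self p
      push_cast at this
      linear_combination this
    rw [Finset.prod_congr rfl hterm, Finset.prod_mul_distrib, Finset.prod_const,
      card_range] at hasc
    have hdesc := congrArg (Nat.cast : ℕ → K) (aux_desc q m hm2)
    push_cast [K] at hdesc
    calc ((q+m).factorial : K) * ((q-m).factorial : K)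
        = ((q.factorial:K) * ((-1)^m * ∏ i ∈ range m, ((q-i:ℕ):K))) * ((q-m).factorial : K) := by
          rw [hasc]
      _ = (-1)^m * (q.factorial:K) * (((q-m).factorial:K) * ∏ i ∈ range m, ((q-i:ℕ):K)) := by ring
      _ = (-1)^m * ((q.factorial : K))^2 := by rw [hdesc]; ring
  -- Step E : combine, cancelling m!
  have hmfne : ((m.factorial : K)) ≠ 0 := by
    rw [Ne, ZMod.natCast_eq_zero_iff]
    intro hdvd
    have := (Nat.Prime.dvd_factorial (Fact.out)).mp hdvd
    omega
  apply mul_left_cancel₀ hmfne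
  have hmfn : m.factorial = m * (m-1).factorial := by
    have h' : m - 1 + 1 = m := by omega
    calc m.factorial = ((m-1)+1).factorial := by rw [h']
      _ = ((m-1)+1) * (m-1).factorial := Nat.factorial_succ _
      _ = m * (m-1).factorial := by rw [h']
  have hmf : (m.factorial : K) = (m:K) * ((m-1).factorial : K) := by
    rw [hmfn]; push_cast [K]; ring
  have hascm := congrArg (Nat.cast : ℕ → K) (aux_asc m q)
  push_cast [K] at hascm
  calc (m.factorial:K) * ((2:K) * (m:K)^2 *
        ((∏ j ∈ (range q).erase (m-1), ((j:K)+1-(m:K))) * ∏ j ∈ (range q).erase (m-1), ((j:K)+1+(m:K))))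
      = (m:K) * (∏ j ∈ (range q).erase (m-1), ((j:K)+1-(m:K))) *
          ((m.factorial:K) * ((2:K)*(m:K) * ∏ j ∈ (range q).erase (m-1), ((j:K)+1+(m:K)))) := by ring
    _ = (m:K) * ((-1)^(m-1) * ((m-1).factorial : K) * ((q-m).factorial : K)) *
          ((m.factorial:K) * (∏ j ∈ range q, ((j:K)+1+(m:K)))) := by
        rw [hPneg, ← hC]
    _ = (-1)^(m-1) * ((q-m).factorial : K) * ((m:K) * ((m-1).factorial:K)) *
          ((m.factorial:K) * ((∏ j ∈ range q, (m+1+j) : ℕ) : K)) := by rw [hfull]; ring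
    _ = (-1)^(m-1) * ((q-m).factorial : K) * (m.factorial:K) * (((m+q).factorial : ℕ):K) := by
        rw [← hmf, ← aux_asc m q]; push_cast [K]; ring
    _ = (-1)^(m-1) * (m.factorial:K) * (((q+m).factorial:K) * ((q-m).factorial : K)) := by
        rw [Nat.add_comm m q]; ring
    _ = (-1)^(m-1) * (m.factorial:K) * ((-1)^m * ((q.factorial : K))^2) := by rw [hD]
    _ = (m.factorial:K) * (-((q.factorial:K))^2) := by
        have hsign : ((-1:K))^m = -(-1)^(m-1) := by
          conv_lhs => rw [show m = (m-1)+1 by omega]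
          rw [pow_succ]; ring
        have hsq : ((-1:K))^(m-1) * (-1)^(m-1) = 1 := by
          rw [← pow_add, ← two_mul, pow_mul]; norm_num
        rw [hsign]
        linear_combination (-(m.factorial:K) * ((q.factorial:K))^2) * hsq
lemma key2 (p : ℕ) [Fact p.Prime] (q m : ℕ) (hq : 2*q+1 = p) (hm1 : 1 ≤ m) (hm2 : m ≤ q)
    (τ : ZMod (p^2)) :
    (m : ZMod (p^2)) * (∏ j ∈ Finset.range q,
        (((j : ZMod (p^2))+1)^2 - ((m : ZMod (p^2)) + (p : ZMod (p^2))*τ)^2))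
      = (p : ZMod (p^2)) * τ * ((q.factorial : ZMod (p^2)))^2 := by
  revert τ
  set R := ZMod (p^2)
  intro τ
  have hp2 : ((p:R))^2 = 0 := by
    rw [← Nat.cast_pow]; exact ZMod.natCast_self (p^2)
  set ε : R := (p:R) * τ with hεdef
  have hε : ε * ε = 0 := by
    have h : ε * ε = (p:R)^2 * (τ * τ) := by rw [hεdef]; ring
    rw [h, hp2, zero_mul]
  have hεp : ε * (p:R) = 0 := by
    have h : ε * (p:R) = (p:R)^2 * τ := by rw [hεdef]; ring
    rw [h, hp2, zero_mul]
  have hmem : m - 1 ∈ range q := by rw [mem_range]; omega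
  have hfac : ∀ j ∈ range q, ((j:R)+1)^2 - ((m:R) + ε)^2
      = (((j:R)+1)^2 - (m:R)^2) + ε * (-(2*(m:R)) - ε) := by intros; ring
  rw [Finset.prod_congr rfl hfac, ← Finset.mul_prod_erase _ _ hmem]
  have hm1R : ((m-1:ℕ):R) = (m:R) - 1 := by rw [Nat.cast_sub hm1, Nat.cast_one]
  have hfirst : ((((m-1:ℕ):R)+1)^2 - (m:R)^2) + ε * (-(2*(m:R)) - ε)
      = ε * (-(2*(m:R)) - ε) := by rw [hm1R]; ring
  rw [hfirst]
  have heps := aux_eps hε ((range q).erase (m-1))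
    (fun j => ((j:R)+1)^2 - (m:R)^2) (fun _ => (-(2*(m:R)) - ε))
  calc (m:R) * (ε * (-(2*(m:R)) - ε) *
        ∏ j ∈ (range q).erase (m-1), ((((j:R)+1)^2 - (m:R)^2) + ε * (-(2*(m:R)) - ε)))
      = (m:R) * (-(2*(m:R)) - ε) *
        (ε * ∏ j ∈ (range q).erase (m-1), ((((j:R)+1)^2 - (m:R)^2) + ε * (-(2*(m:R)) - ε))) := by
        ring
    _ = (m:R) * (-(2*(m:R)) - ε) *
        (ε * ∏ j ∈ (range q).erase (m-1), (((j:R)+1)^2 - (m:R)^2)) := by rw [heps]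
    _ = ε * ((-(2*(m:R)^2)) * ∏ j ∈ (range q).erase (m-1), (((j:R)+1)^2 - (m:R)^2))
        - (ε * ε) * ((m:R) * ∏ j ∈ (range q).erase (m-1), (((j:R)+1)^2 - (m:R)^2)) := by ring
    _ = ε * ((-(2*(m:R)^2)) * ∏ j ∈ (range q).erase (m-1), (((j:R)+1)^2 - (m:R)^2)) := by
        rw [hε]; ring
    _ = ε * ((q.factorial : R))^2 := by
        set N : ℤ := -(2*(m:ℤ)^2) * (∏ j ∈ (range q).erase (m-1), (((j:ℤ)+1)^2 - (m:ℤ)^2))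
          - ((q.factorial : ℤ))^2 with hNdef
        have hNzero : ((N : ℤ) : ZMod p) = 0 := by
          have hk := key p q m hq hm1 hm2
          rw [hNdef]
          push_cast
          linear_combination -hk
        have hdvd : (p:ℤ) ∣ N := (ZMod.intCast_zmod_eq_zero_iff_dvd N p).mp hNzero
        obtain ⟨N', hN'⟩ := hdvd
        have hNR : ((N:ℤ) : R) = (p:R) * ((N':ℤ):R) := by rw [hN']; push_cast [R]; ring
        have hεN : ε * ((N:ℤ):R) = 0 := by rw [hNR, ← mul_assoc, hεp, zero_mul]
        have hX : (-(2*(m:R)^2)) * ∏ j ∈ (range q).erase (m-1), (((j:R)+1)^2 - (m:R)^2)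
            = ((q.factorial : R))^2 + ((N:ℤ):R) := by
          rw [hNdef]; push_cast [R]; ring
        rw [hX, mul_add, hεN, add_zero]

lemma aux_coe_prod {p : ℕ} [Fact p.Prime] {ι : Type*} (s : Finset ι) (f : ι → ℤ_[p]) :
    ((∏ j ∈ s, f j : ℤ_[p]) : ℚ_[p]) = ∏ j ∈ s, ((f j : ℚ_[p])) :=
  map_prod (PadicInt.Coe.ringHom) f s


/-- For a prime `p > 3`, an integer `1 ≤ m ≤ (p-1)/2`, and a `p`-adic integer `t`:
`C(m + pt - 1, (p-1)/2) · C(-1 - pt - m, (p-1)/2) ≡ pt/m (mod p²)` in `ℤ_p`,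
i.e. the difference has `p`-adic norm at most `p^{-2}`. -/
theorem padicChoose_mul_padicChoose_congr (p : ℕ) [Fact p.Prime] (hp : 3 < p)
    (m : ℕ) (hm1 : 1 ≤ m) (hm2 : m ≤ (p - 1) / 2) (t : ℤ_[p]) :
    ‖padicChoose ((m : ℚ_[p]) + (p : ℚ_[p]) * (t : ℚ_[p]) - 1) ((p - 1) / 2) *
        padicChoose (-1 - (p : ℚ_[p]) * (t : ℚ_[p]) - (m : ℚ_[p])) ((p - 1) / 2) -
      (p : ℚ_[p]) * (t : ℚ_[p]) / (m : ℚ_[p])‖ ≤ (p : ℝ) ^ (-2 : ℤ) := by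
  have hpp : p.Prime := Fact.out
  set q := (p - 1) / 2 with hqdef
  have hodd : p % 2 = 1 := by
    rcases hpp.eq_two_or_odd with h | h
    · omega
    · exact h
  have hq : 2 * q + 1 = p := by omega
  -- the p-adic integer measuring the difference
  set z : ℤ_[p] := (m:ℤ_[p]) * (∏ j ∈ Finset.range q,
      (((j:ℤ_[p])+1)^2 - ((m:ℤ_[p]) + (p:ℤ_[p])*t)^2))
      - (p:ℤ_[p])*t*((q.factorial : ℤ_[p]))^2 with hzdef
  have hznorm : ‖z‖ ≤ (p:ℝ)^(-2:ℤ) := by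
    have h2 : ((-2:ℤ)) = (-(2:ℕ) : ℤ) := by norm_num
    rw [h2, PadicInt.norm_le_pow_iff_mem_span_pow, ← PadicInt.ker_toZModPow, RingHom.mem_ker,
      hzdef]
    simp only [map_sub, map_mul, map_pow, map_natCast, map_add, map_one, map_prod]
    rw [key2 p q m hq hm1 hm2 (PadicInt.toZModPow 2 t), sub_self]
  -- norms of the unit denominators
  have hmQ : ‖((m:ℤ):ℚ_[p])‖ = 1 := by
    refine le_antisymm (Padic.norm_int_le_one _) (not_lt.mp ?_)
    intro hlt
    have hd := (Padic.norm_intCast_lt_one_iff (k := (m:ℤ))).mp hlt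
    rw [Int.natCast_dvd_natCast] at hd
    have := Nat.le_of_dvd (by omega) hd
    omega
  have hfQ : ‖((q.factorial:ℤ):ℚ_[p])‖ = 1 := by
    refine le_antisymm (Padic.norm_int_le_one _) (not_lt.mp ?_)
    intro hlt
    have hd := (Padic.norm_intCast_lt_one_iff (k := (q.factorial:ℤ))).mp hlt
    rw [Int.natCast_dvd_natCast] at hd
    have := (Nat.Prime.dvd_factorial hpp).mp hd
    omega
  rw [Int.cast_natCast] at hmQ hfQ
  have hmne : ((m:ℚ_[p])) ≠ 0 := by
    intro h0; rw [h0, norm_zero] at hmQ; norm_num at hmQ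
  have hfne : ((q.factorial:ℚ_[p])) ≠ 0 := by
    intro h0; rw [h0, norm_zero] at hfQ; norm_num at hfQ
  -- the coercion of z
  have hcoe : ((z : ℤ_[p]) : ℚ_[p]) = (m:ℚ_[p]) * (∏ j ∈ Finset.range q,
      (((j:ℚ_[p])+1)^2 - ((m:ℚ_[p]) + (p:ℚ_[p])*(t:ℚ_[p]))^2))
      - (p:ℚ_[p])*(t:ℚ_[p])*((q.factorial : ℚ_[p]))^2 := by
    rw [hzdef]
    push_cast [aux_coe_prod]
    ring
  -- rewrite the goal expression
  have hprod : (∏ j ∈ Finset.range q, (((m:ℚ_[p]) + (p:ℚ_[p])*(t:ℚ_[p]) - 1) - (j:ℚ_[p]))) *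
      (∏ j ∈ Finset.range q, ((-1 - (p:ℚ_[p])*(t:ℚ_[p]) - (m:ℚ_[p])) - (j:ℚ_[p]))) =
      ∏ j ∈ Finset.range q, (((j:ℚ_[p])+1)^2 - ((m:ℚ_[p]) + (p:ℚ_[p])*(t:ℚ_[p]))^2) := by
    rw [← Finset.prod_mul_distrib]
    apply Finset.prod_congr rfl
    intros; ring
  have hE : padicChoose ((m : ℚ_[p]) + (p : ℚ_[p]) * (t : ℚ_[p]) - 1) q *
        padicChoose (-1 - (p : ℚ_[p]) * (t : ℚ_[p]) - (m : ℚ_[p])) q -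
      (p : ℚ_[p]) * (t : ℚ_[p]) / (m : ℚ_[p])
      = ((z : ℤ_[p]) : ℚ_[p]) / ((m:ℚ_[p]) * ((q.factorial:ℚ_[p]))^2) := by
    unfold padicChoose
    rw [div_mul_div_comm, hprod, hcoe]
    field_simp
  rw [hE, norm_div, PadicInt.padic_norm_e_of_padicInt, norm_mul, norm_pow, hmQ, hfQ]
  simpa using hznorm
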